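/- Let S be an ℝ≥0-module, let W be a Hausdorff locally convex real topological vector space, and let T be a superlinear set-valued map assigning to each z ∈ S a nonempty compact convex subset T(z) ⊆ W. Then the following are equivalent: (1) T is linear; (2) for every x ∈ S and every y ∈ T(x) there exists a linear selection a of T with a(x) = y. -/

import Mathlib

open scoped NNReal Pointwise

set_option linter.unusedSectionVars false

section Aux

variable {S W : Type*} [AddCommMonoid S] [Module ℝ≥0 S]
  [AddCommGroup W] [Module ℝ W] [TopologicalSpace W] [IsTopologicalAddGroup W]
  [ContinuousSMul ℝ W] [T2Space W] [LocallyConvexSpace ℝ W]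

/-- A "good" set-valued map: nonempty compact convex values, additive and
positively homogeneous. -/
def GoodMap (G : S → Set W) : Prop :=
  (∀ z, (G z).Nonempty) ∧ (∀ z, IsCompact (G z)) ∧ (∀ z, Convex ℝ (G z)) ∧
  (∀ u v, G u + G v = G (u + v)) ∧
  (∀ c : ℝ≥0, 0 < c → ∀ z, G (c • z) = (c : ℝ) • G z)

/-- The argmax face cut of a good map by a continuous linear functional. -/
def faceMap (G : S → Set W) (f : W →L[ℝ] ℝ) : S → Set W :=
  fun z => {w ∈ G z | ∀ v ∈ G z, f v ≤ f w}

lemma faceMap_subset (G : S → Set W) (f : W →L[ℝ] ℝ) (z : S) :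
    faceMap G f z ⊆ G z := fun _ hw => hw.1

lemma goodMap_faceMap {G : S → Set W} (hG : GoodMap G) (f : W →L[ℝ] ℝ) :
    GoodMap (faceMap G f) := by
  obtain ⟨hne, hcpt, hconv, hadd, hhom⟩ := hG
  refine ⟨?_, ?_, ?_, ?_, ?_⟩
  · -- nonempty
    intro z
    obtain ⟨w, hw, hmax⟩ := (hcpt z).exists_isMaxOn (hne z) f.continuous.continuousOn
    exact ⟨w, hw, fun v hv => hmax hv⟩
  · -- compact
    intro z
    have hset : faceMap G f z = G z ∩ ⋂ v ∈ G z, {w | f v ≤ f w} := by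
      ext w; simp [faceMap, Set.mem_iInter]
    rw [hset]
    exact (hcpt z).inter_right
      (isClosed_biInter fun v _ => isClosed_le continuous_const f.continuous)
  · -- convex
    intro z
    have hset : faceMap G f z = G z ∩ ⋂ v ∈ G z, {w | f v ≤ f w} := by
      ext w; simp [faceMap, Set.mem_iInter]
    rw [hset]
    exact (hconv z).inter (convex_iInter₂ fun v _ =>
      convex_halfSpace_ge ⟨f.map_add, f.map_smul⟩ (f v))
  · -- additive
    intro u v
    apply Set.Subset.antisymm
    · rintro w hw
      rw [Set.mem_add] at hw
      obtain ⟨a, ⟨ha, hamax⟩, b, ⟨hb, hbmax⟩, rfl⟩ := hw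
      refine ⟨by rw [← hadd]; exact Set.add_mem_add ha hb, ?_⟩
      intro w' hw'
      rw [← hadd, Set.mem_add] at hw'
      obtain ⟨a', ha', b', hb', rfl⟩ := hw'
      have h1 := hamax a' ha'
      have h2 := hbmax b' hb'
      simp only [map_add]
      linarith
    · rintro w ⟨hw, hwmax⟩
      rw [← hadd, Set.mem_add] at hw
      obtain ⟨a, ha, b, hb, rfl⟩ := hw
      have hamax : ∀ a' ∈ G u, f a' ≤ f a := by
        intro a' ha'
        have := hwmax (a' + b) (by rw [← hadd]; exact Set.add_mem_add ha' hb)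
        simp only [map_add] at this; linarith
      have hbmax : ∀ b' ∈ G v, f b' ≤ f b := by
        intro b' hb'
        have := hwmax (a + b') (by rw [← hadd]; exact Set.add_mem_add ha hb')
        simp only [map_add] at this; linarith
      exact Set.add_mem_add ⟨ha, hamax⟩ ⟨hb, hbmax⟩
  · -- homogeneous
    intro c hc z
    have hcR : (0:ℝ) < (c:ℝ) := by exact_mod_cast hc
    ext w
    constructor
    · rintro ⟨hw, hwmax⟩
      rw [hhom c hc] at hw
      rw [Set.mem_smul_set] at hw
      obtain ⟨w', hw', rfl⟩ := hw
      rw [Set.mem_smul_set]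
      refine ⟨w', ⟨hw', ?_⟩, rfl⟩
      intro v hv
      have := hwmax ((c:ℝ) • v) (by rw [hhom c hc]; exact Set.smul_mem_smul_set hv)
      simp only [map_smul, smul_eq_mul] at this
      exact le_of_mul_le_mul_left this hcR
    · rintro hw
      rw [Set.mem_smul_set] at hw
      obtain ⟨w', ⟨hw', hmax'⟩, rfl⟩ := hw
      refine ⟨by rw [hhom c hc]; exact Set.smul_mem_smul_set hw', ?_⟩
      intro v hv
      rw [hhom c hc, Set.mem_smul_set] at hv
      obtain ⟨v', hv', rfl⟩ := hv
      simp only [map_smul, smul_eq_mul]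
      exact mul_le_mul_of_nonneg_left (hmax' v' hv') hcR.le

/-- Pointwise intersection of a nonempty chain of good maps is good. -/
lemma goodMap_chainInter (𝒞 : Set (S → Set W)) (hne : 𝒞.Nonempty)
    (hchain : IsChain (· ≤ ·) 𝒞) (hgood : ∀ G ∈ 𝒞, GoodMap G) :
    GoodMap (fun z => ⋂ G ∈ 𝒞, G z) := by
  haveI : Nonempty ↥𝒞 := hne.to_subtype
  have hbi : ∀ z, (⋂ G ∈ 𝒞, G z) = ⋂ G : ↥𝒞, (G : S → Set W) z := fun z => by
    rw [Set.iInter_coe_set]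
  have hdir : ∀ z, Directed (· ⊇ ·) (fun G : ↥𝒞 => (G : S → Set W) z) := by
    intro z G G'
    rcases eq_or_ne G G' with rfl | h
    · exact ⟨G, subset_rfl, subset_rfl⟩
    · rcases hchain G.2 G'.2 (fun hh => h (Subtype.ext hh)) with h' | h'
      · exact ⟨G, subset_rfl, h' z⟩
      · exact ⟨G', h' z, subset_rfl⟩
  refine ⟨?_, ?_, ?_, ?_, ?_⟩
  · -- nonempty
    intro z
    show (⋂ G ∈ 𝒞, G z).Nonempty
    rw [hbi z]
    exact IsCompact.nonempty_iInter_of_directed_nonempty_isCompact_isClosed _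
      (hdir z) (fun G => (hgood G G.2).1 z) (fun G => (hgood G G.2).2.1 z)
      (fun G => ((hgood G G.2).2.1 z).isClosed)
  · -- compact
    intro z
    show IsCompact (⋂ G ∈ 𝒞, G z)
    obtain ⟨G₀, hG₀⟩ := hne
    refine IsCompact.of_isClosed_subset ((hgood G₀ hG₀).2.1 z)
      (isClosed_biInter fun G hG => ((hgood G hG).2.1 z).isClosed)
      (Set.biInter_subset_of_mem hG₀)
  · -- convex
    intro z
    show Convex ℝ (⋂ G ∈ 𝒞, G z)
    exact convex_iInter₂ fun G hG => (hgood G hG).2.2.1 z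
  · -- additive
    intro u v
    show (⋂ G ∈ 𝒞, G u) + (⋂ G ∈ 𝒞, G v) = ⋂ G ∈ 𝒞, G (u + v)
    apply Set.Subset.antisymm
    · intro w hw
      rw [Set.mem_add] at hw
      obtain ⟨a, ha, b, hb, rfl⟩ := hw
      simp only [Set.mem_iInter] at ha hb ⊢
      intro G hG
      rw [← (hgood G hG).2.2.2.1 u v]
      exact Set.add_mem_add (ha G hG) (hb G hG)
    · intro w hw
      simp only [Set.mem_iInter] at hw
      -- decomposition fibers
      set D : ↥𝒞 → Set (W × W) := fun G =>
        (((G : S → Set W) u) ×ˢ ((G : S → Set W) v)) ∩ {p | p.1 + p.2 = w} with hD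
      have hDne : ∀ G : ↥𝒞, (D G).Nonempty := by
        intro G
        have hw' : w ∈ (G : S → Set W) u + (G : S → Set W) v := by
          rw [(hgood G G.2).2.2.2.1 u v]; exact hw G G.2
        rw [Set.mem_add] at hw'
        obtain ⟨a, ha, b, hb, hab⟩ := hw'
        exact ⟨(a, b), ⟨⟨ha, hb⟩, hab⟩⟩
      have hDcpt : ∀ G : ↥𝒞, IsCompact (D G) :=
        fun G => (((hgood G G.2).2.1 u).prod ((hgood G G.2).2.1 v)).inter_right
          (isClosed_eq (continuous_fst.add continuous_snd) continuous_const)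
      have hDdir : Directed (· ⊇ ·) D := by
        intro G G'
        rcases eq_or_ne G G' with rfl | h
        · exact ⟨G, subset_rfl, subset_rfl⟩
        · rcases hchain G.2 G'.2 (fun hh => h (Subtype.ext hh)) with h' | h'
          · exact ⟨G, subset_rfl, Set.inter_subset_inter
              (Set.prod_mono (h' u) (h' v)) subset_rfl⟩
          · exact ⟨G', Set.inter_subset_inter
              (Set.prod_mono (h' u) (h' v)) subset_rfl, subset_rfl⟩
      obtain ⟨p, hp⟩ := IsCompact.nonempty_iInter_of_directed_nonempty_isCompact_isClosed
        D hDdir hDne hDcpt (fun G => ((hDcpt G).isClosed))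
      simp only [Set.mem_iInter, hD, Set.mem_inter_iff, Set.mem_prod,
        Set.mem_setOf_eq] at hp
      have h1 : p.1 ∈ ⋂ G ∈ 𝒞, G u := by
        simp only [Set.mem_iInter]; exact fun G hG => (hp ⟨G, hG⟩).1.1
      have h2 : p.2 ∈ ⋂ G ∈ 𝒞, G v := by
        simp only [Set.mem_iInter]; exact fun G hG => (hp ⟨G, hG⟩).1.2
      rw [Set.mem_add]
      exact ⟨p.1, h1, p.2, h2, (hp (Classical.arbitrary _)).2⟩
  · -- homogeneous
    intro c hc z
    show (⋂ G ∈ 𝒞, G (c • z)) = (c:ℝ) • ⋂ G ∈ 𝒞, G z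
    have hcR : ((c:ℝ)) ≠ 0 := by positivity
    ext w
    simp only [Set.mem_iInter, Set.mem_smul_set_iff_inv_smul_mem₀ hcR]
    constructor
    · intro h G hG
      have := h G hG
      rw [(hgood G hG).2.2.2.2 c hc z,
        Set.mem_smul_set_iff_inv_smul_mem₀ hcR] at this
      exact this
    · intro h G hG
      rw [(hgood G hG).2.2.2.2 c hc z, Set.mem_smul_set_iff_inv_smul_mem₀ hcR]
      exact h G hG

/-- Every good map has a good minimal sub-map. -/
lemma exists_minimal_goodMap {F : S → Set W} (hF : GoodMap F) :
    ∃ G : S → Set W, GoodMap G ∧ G ≤ F ∧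
      ∀ G' : S → Set W, GoodMap G' → G' ≤ G → G' = G := by
  let s : Set ((S → Set W)ᵒᵈ) := {G | GoodMap (OrderDual.ofDual G) ∧ OrderDual.ofDual G ≤ F}
  have h := zorn_le_nonempty₀ s ?_ (OrderDual.toDual F) ⟨hF, le_refl F⟩
  · obtain ⟨m, _, hm⟩ := h
    refine ⟨OrderDual.ofDual m, hm.1.1, hm.1.2, ?_⟩
    intro G' hG' hle
    have := hm.2 (y := OrderDual.toDual G') ⟨hG', le_trans hle hm.1.2⟩ hle
    exact le_antisymm hle this
  · intro c hcs hchain y hy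
    -- c is a chain in the dual order; its pointwise intersection is a lower bound
    set 𝒞 : Set (S → Set W) := OrderDual.ofDual '' c with h𝒞
    have h𝒞ne : 𝒞.Nonempty := ⟨OrderDual.ofDual y, ⟨y, hy, rfl⟩⟩
    have h𝒞chain : IsChain (· ≤ ·) 𝒞 := by
      rintro _ ⟨a, ha, rfl⟩ _ ⟨b, hb, rfl⟩ hne
      rcases hchain ha hb (fun h => hne (congrArg OrderDual.ofDual h)) with h | h
      · exact Or.inr h
      · exact Or.inl h
    have h𝒞good : ∀ G ∈ 𝒞, GoodMap G := by
      rintro _ ⟨a, ha, rfl⟩; exact (hcs ha).1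
    refine ⟨OrderDual.toDual (fun z => ⋂ G ∈ 𝒞, G z),
      ⟨goodMap_chainInter 𝒞 h𝒞ne h𝒞chain h𝒞good, ?_⟩, ?_⟩
    · intro z
      exact le_trans (Set.biInter_subset_of_mem (⟨y, hy, rfl⟩ : OrderDual.ofDual y ∈ 𝒞))
        ((hcs hy).2 z)
    · intro G hG z
      exact Set.biInter_subset_of_mem (⟨G, hG, rfl⟩ : OrderDual.ofDual G ∈ 𝒞)

/-- Every good map admits a linear selection. -/
lemma exists_selection {F : S → Set W} (hF : GoodMap F) :
    ∃ a : S → W, (∀ z, a z ∈ F z) ∧ (∀ u v, a (u + v) = a u + a v) ∧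
      (∀ c : ℝ≥0, 0 < c → ∀ u, a (c • u) = (c : ℝ) • a u) := by
  obtain ⟨G, hG, hGF, hGmin⟩ := exists_minimal_goodMap hF
  -- minimal good maps have singleton values
  have hconst : ∀ (f : W →L[ℝ] ℝ) z, ∀ w ∈ G z, ∀ v ∈ G z, f v ≤ f w := by
    intro f z w hw v hv
    have hface := hGmin (faceMap G f) (goodMap_faceMap hG f) (fun z => faceMap_subset G f z)
    rw [← hface] at hw
    exact hw.2 v hv
  have hsingle : ∀ z, ∀ w ∈ G z, ∀ v ∈ G z, v = w := by
    intro z w hw v hv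
    by_contra hne
    obtain ⟨f, hf⟩ := SeparatingDual.exists_separating_of_ne (R := ℝ) hne
    exact hf (le_antisymm (hconst f z w hw v hv) (hconst f z v hv w hw))
  choose a ha using hG.1
  refine ⟨a, fun z => hGF z (ha z), ?_, ?_⟩
  · intro u v
    have : a u + a v ∈ G (u + v) := by
      rw [← hG.2.2.2.1 u v]; exact Set.add_mem_add (ha u) (ha v)
    exact (hsingle (u + v) (a (u+v)) (ha (u+v)) _ this).symm
  · intro c hc u
    have : (c:ℝ) • a u ∈ G (c • u) := by
      rw [hG.2.2.2.2 c hc u]; exact Set.smul_mem_smul_set (ha u)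
    exact (hsingle (c • u) (a (c • u)) (ha (c • u)) _ this).symm

end Aux

/-- A superlinear set-valued map with nonempty compact convex values is linear
iff every point of its graph lies on the graph of some linear selection. -/
theorem stmt2 {S W : Type*} [AddCommMonoid S] [Module ℝ≥0 S]
    [AddCommGroup W] [Module ℝ W] [TopologicalSpace W] [IsTopologicalAddGroup W]
    [ContinuousSMul ℝ W] [T2Space W] [LocallyConvexSpace ℝ W]
    (T : S → Set W)
    (hT : ∀ z, (T z).Nonempty ∧ IsCompact (T z) ∧ Convex ℝ (T z))
    (hsuper : ∀ x y, T x + T y ⊆ T (x + y))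
    (hhom : ∀ c : ℝ≥0, 0 < c → ∀ x, T (c • x) = (c : ℝ) • T x) :
    ((∀ x y, T x + T y = T (x + y)) ∧
        (∀ c : ℝ≥0, 0 < c → ∀ x, T (c • x) = (c : ℝ) • T x)) ↔
      (∀ x : S, ∀ y ∈ T x,
        ∃ a : S → W, (∀ z, a z ∈ T z) ∧ (∀ u v, a (u + v) = a u + a v) ∧
          (∀ c : ℝ≥0, 0 < c → ∀ u, a (c • u) = (c : ℝ) • a u) ∧ a x = y) := by
  constructor
  · rintro ⟨hadd, -⟩ x y hy
    have hTgood : GoodMap T :=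
      ⟨fun z => (hT z).1, fun z => (hT z).2.1, fun z => (hT z).2.2, hadd, hhom⟩
    -- the set of linear selections
    set 𝒜 : Set (S → W) := {a | (∀ z, a z ∈ T z) ∧ (∀ u v, a (u + v) = a u + a v) ∧
      (∀ c : ℝ≥0, 0 < c → ∀ u, a (c • u) = (c : ℝ) • a u)} with h𝒜
    set R : Set W := (fun a : S → W => a x) '' 𝒜 with hR
    -- 𝒜 is compact
    have h𝒜eq : 𝒜 = (Set.univ.pi T) ∩
        ((⋂ u, ⋂ v, {a : S → W | a (u + v) = a u + a v}) ∩
          (⋂ c : ℝ≥0, ⋂ _ : 0 < c, ⋂ u, {a : S → W | a (c • u) = (c : ℝ) • a u})) := by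
      ext a
      simp only [h𝒜, Set.mem_setOf_eq, Set.mem_inter_iff, Set.mem_pi, Set.mem_univ,
        forall_const, Set.mem_iInter, Set.mem_setOf_eq]
    have h𝒜cpt : IsCompact 𝒜 := by
      rw [h𝒜eq]
      refine (isCompact_univ_pi fun z => (hT z).2.1).inter_right (IsClosed.inter ?_ ?_)
      · exact isClosed_iInter fun u => isClosed_iInter fun v =>
          isClosed_eq (continuous_apply _) ((continuous_apply u).add (continuous_apply v))
      · exact isClosed_iInter fun c => isClosed_iInter fun _ => isClosed_iInter fun u =>
          isClosed_eq (continuous_apply _) ((continuous_apply u).const_smul _)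
    have hRcpt : IsCompact R := h𝒜cpt.image (continuous_apply x)
    have hRconv : Convex ℝ R := by
      rintro _ ⟨a₁, ha₁, rfl⟩ _ ⟨a₂, ha₂, rfl⟩ p q hp hq hpq
      refine ⟨fun z => p • a₁ z + q • a₂ z, ⟨?_, ?_, ?_⟩, rfl⟩
      · intro z
        exact (hT z).2.2 (ha₁.1 z) (ha₂.1 z) hp hq hpq
      · intro u v
        show p • a₁ (u + v) + q • a₂ (u + v) =
          (p • a₁ u + q • a₂ u) + (p • a₁ v + q • a₂ v)
        rw [ha₁.2.1 u v, ha₂.2.1 u v]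
        simp only [smul_add]; abel
      · intro c hc u
        show p • a₁ (c • u) + q • a₂ (c • u) = (c:ℝ) • (p • a₁ u + q • a₂ u)
        rw [ha₁.2.2 c hc u, ha₂.2.2 c hc u]
        rw [smul_add, smul_comm ((c:ℝ)) p, smul_comm ((c:ℝ)) q]
    -- y belongs to R
    by_contra hyR'
    have hyR : y ∉ R := fun h => by
      obtain ⟨a, ha, hax⟩ := h
      exact hyR' ⟨a, ha.1, ha.2.1, ha.2.2, hax⟩
    obtain ⟨f, u, hfu, hfy⟩ :=
      geometric_hahn_banach_closed_point hRconv hRcpt.isClosed hyR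
    -- a selection of the f-argmax face of T
    obtain ⟨a, haF, haadd, hahom⟩ := exists_selection (goodMap_faceMap hTgood f)
    have haT : ∀ z, a z ∈ T z := fun z => faceMap_subset T f z (haF z)
    have haR : a x ∈ R := ⟨a, ⟨haT, haadd, hahom⟩, rfl⟩
    have h1 : f (a x) < u := hfu _ haR
    have h2 : f y ≤ f (a x) := (haF x).2 y hy
    linarith
  · intro hsel
    refine ⟨?_, hhom⟩
    intro u v
    apply Set.Subset.antisymm (hsuper u v)
    intro w hw
    obtain ⟨a, haT, haadd, -, hax⟩ := hsel (u + v) w hw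
    rw [← hax, haadd u v]
    exact Set.add_mem_add (haT u) (haT v)
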